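/- For any two two-terminal graphs G₁, G₂ whose polynomials Z^dif(Gᵢ;q) are not identically zero, with effective edge interactions y_{Gᵢ} := (q−1)·Z^same(Gᵢ;q)/Z^dif(Gᵢ;q) regarded as elements of the field ℂ(q) of rational functions in q, the following identities hold in ℂ(q): y_{G₁∥G₂} = y_{G₁}·y_{G₂}, and y_{G₁⋈G₂}·(y_{G₁} + y_{G₂} + q − 2) = y_{G₁}·y_{G₂} + q − 1 (equivalently, f_q(y_{G₁⋈G₂}) = f_q(y_{G₁})·f_q(y_{G₂}) wherever defined, where f_q(y) = 1 + q/(y−1)). -/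

import Mathlib

open Polynomial

noncomputable section

/-- A finite (undirected) multigraph: a finite vertex type, a finite edge index type,
and a map assigning to each edge its pair of endpoints. -/
structure Multigraph where
  V : Type
  E : Type
  [finV : Finite V]
  [finE : Fintype E]
  ends : E → V × V

attribute [instance] Multigraph.finV Multigraph.finE

namespace Multigraph

/-- The spanning subgraph `(V, F)` determined by a set `F` of edges, as a simple graph
recording adjacency. -/
def spanning (G : Multigraph) (F : Finset G.E) : SimpleGraph G.V where
  Adj u v := u ≠ v ∧ ∃ e ∈ F, G.ends e = (u, v) ∨ G.ends e = (v, u)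
  symm := by
    refine ⟨?_⟩
    rintro u v ⟨huv, e, he, h⟩
    exact ⟨huv.symm, e, he, h.symm⟩
  loopless := by refine ⟨?_⟩; rintro v ⟨hv, -⟩; exact hv rfl

/-- `k(F)`: the number of connected components of the spanning subgraph `(V, F)`. -/
def k (G : Multigraph) (F : Finset G.E) : ℕ :=
  Nat.card (G.spanning F).ConnectedComponent

/-- The chromatic polynomial `Z(G;q) = ∑_{F ⊆ E} (-1)^{|F|} q^{k(F)}`. -/
def Z (G : Multigraph) : Polynomial ℂ :=
  ∑ F : Finset G.E, (-1 : Polynomial ℂ) ^ F.card * X ^ G.k F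

/-- A multigraph is loopless if no edge has equal endpoints. -/
def Loopless (G : Multigraph) : Prop := ∀ e : G.E, (G.ends e).1 ≠ (G.ends e).2

/-- The degree of a vertex: the number of edge-ends incident to it. -/
def degree (G : Multigraph) (x : G.V) : ℕ :=
  Nat.card {e : G.E // (G.ends e).1 = x} + Nat.card {e : G.E // (G.ends e).2 = x}

end Multigraph

/-- A two-terminal graph: a finite multigraph together with two distinct
distinguished vertices, the start vertex `s` and the end vertex `t`. -/
structure TTGraph extends Multigraph where
  s : V
  t : V
  hst : s ≠ t

namespace TTGraph

/-- The chromatic polynomial of (the underlying multigraph of) a two-terminal graph. -/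
def Z (G : TTGraph) : Polynomial ℂ := G.toMultigraph.Z

def Loopless (G : TTGraph) : Prop := G.toMultigraph.Loopless

/-- A single edge `K₂`, with its two endpoints as terminals. -/
def K2 : TTGraph where
  V := Bool
  E := Unit
  ends := fun _ => (false, true)
  s := false
  t := true
  hst := Bool.false_ne_true

/-- The identification map used in the parallel composition: `s₂ ↦ s₁`, `t₂ ↦ t₁`. -/
def parMap (G₁ G₂ : TTGraph) (x : G₂.V) :
    G₁.V ⊕ {y : G₂.V // y ≠ G₂.s ∧ y ≠ G₂.t} := by
  classical
  exact if h1 : x = G₂.s then Sum.inl G₁.s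
    else if h2 : x = G₂.t then Sum.inl G₁.t
    else Sum.inr ⟨x, h1, h2⟩

/-- Parallel composition of two-terminal graphs: the disjoint union with `s₁` and `s₂`
identified (the new start) and `t₁` and `t₂` identified (the new end). -/
def par (G₁ G₂ : TTGraph) : TTGraph where
  V := G₁.V ⊕ {y : G₂.V // y ≠ G₂.s ∧ y ≠ G₂.t}
  E := G₁.E ⊕ G₂.E
  ends := Sum.elim
    (fun e => (Sum.inl (G₁.ends e).1, Sum.inl (G₁.ends e).2))
    (fun e => (parMap G₁ G₂ (G₂.ends e).1, parMap G₁ G₂ (G₂.ends e).2))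
  s := Sum.inl G₁.s
  t := Sum.inl G₁.t
  hst := fun h => G₁.hst (Sum.inl.inj h)

/-- The identification map used in the series composition: `s₂ ↦ t₁`. -/
def serMap (G₁ G₂ : TTGraph) (x : G₂.V) :
    G₁.V ⊕ {y : G₂.V // y ≠ G₂.s} := by
  classical
  exact if h : x = G₂.s then Sum.inl G₁.t else Sum.inr ⟨x, h⟩

/-- Series composition of two-terminal graphs: the disjoint union with `t₁` and `s₂`
identified; the new start is `s₁` and the new end is `t₂`. -/
def ser (G₁ G₂ : TTGraph) : TTGraph where
  V := G₁.V ⊕ {y : G₂.V // y ≠ G₂.s}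
  E := G₁.E ⊕ G₂.E
  ends := Sum.elim
    (fun e => (Sum.inl (G₁.ends e).1, Sum.inl (G₁.ends e).2))
    (fun e => (serMap G₁ G₂ (G₂.ends e).1, serMap G₁ G₂ (G₂.ends e).2))
  s := Sum.inl G₁.s
  t := Sum.inr ⟨G₂.t, G₂.hst.symm⟩
  hst := Sum.inl_ne_inr

/-- `Z^dif(G;q) := Z(G ∥ K₂; q)`. -/
def Zdif (G : TTGraph) : Polynomial ℂ := (G.par K2).Z

/-- `Z^same(G;q) := Z(G;q) - Z^dif(G;q)`. -/
def Zsame (G : TTGraph) : Polynomial ℂ := G.Z - G.Zdif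

/-- Series-parallel two-terminal graphs: those obtained from a single edge `K₂` by
repeated series and parallel compositions. -/
inductive IsSP : TTGraph → Prop
  | K2 : IsSP K2
  | ser {G₁ G₂ : TTGraph} : IsSP G₁ → IsSP G₂ → IsSP (G₁.ser G₂)
  | par {G₁ G₂ : TTGraph} : IsSP G₁ → IsSP G₂ → IsSP (G₁.par G₂)

/-- No edge of `G` joins the two terminals (membership in `𝒢*_SP` for series-parallel `G`). -/
def NoSTEdge (G : TTGraph) : Prop :=
  ∀ e : G.E, G.ends e ≠ (G.s, G.t) ∧ G.ends e ≠ (G.t, G.s)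

end TTGraph


/-- The effective edge interaction `y_G = (q-1)·Z^same(G;q)/Z^dif(G;q)` as an element
of the field `ℂ(q)` of rational functions. -/
def TTGraph.y (G : TTGraph) : RatFunc ℂ :=
  (RatFunc.X - 1) * algebraMap (Polynomial ℂ) (RatFunc ℂ) G.Zsame /
    algebraMap (Polynomial ℂ) (RatFunc ℂ) G.Zdif


set_option linter.unreachableTactic false
set_option linter.unusedTactic false

namespace Aux
open Multigraph

attribute [local instance] Classical.propDecidable

noncomputable instance (G : Multigraph) : Fintype G.V := Fintype.ofFinite _

/-- Properness of a coloring. -/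
def proper (G : Multigraph) {n : ℕ} (σ : G.V → Fin n) : Prop :=
  ∀ e : G.E, σ (G.ends e).1 ≠ σ (G.ends e).2

/-- Colorings respecting a subset F are in bijection with functions on components. -/
noncomputable def constEquiv (G : Multigraph) (n : ℕ) (F : Finset G.E) :
    {σ : G.V → Fin n // ∀ e ∈ F, σ (G.ends e).1 = σ (G.ends e).2} ≃
      ((G.spanning F).ConnectedComponent → Fin n) where
  toFun σ := SimpleGraph.ConnectedComponent.lift σ.1 (by
    have key : ∀ (v w : G.V) (p : (G.spanning F).Walk v w), σ.1 v = σ.1 w := by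
      intro v w p
      induction p with
      | nil => rfl
      | cons h p ih =>
        refine Eq.trans ?_ ih
        obtain ⟨hne, e, heF, h'⟩ := h
        have h2 := σ.2 e heF
        rcases h' with h' | h' <;> rw [h'] at h2 <;>
          first | exact h2 | exact h2.symm
    exact fun v w p _ => key v w p)
  invFun g := ⟨fun v => g ((G.spanning F).connectedComponentMk v), by
    intro e he
    by_cases hv : (G.ends e).1 = (G.ends e).2
    · rw [hv]
    · have : (G.spanning F).Adj (G.ends e).1 (G.ends e).2 := ⟨hv, e, he, Or.inl rfl⟩
      show g _ = g _
      rw [SimpleGraph.ConnectedComponent.connectedComponentMk_eq_of_adj this]⟩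
  left_inv σ := by ext v; rfl
  right_inv g := by
    funext c
    induction c using SimpleGraph.ConnectedComponent.ind
    rfl

lemma card_const (G : Multigraph) (n : ℕ) (F : Finset G.E) :
    Nat.card {σ : G.V → Fin n // ∀ e ∈ F, σ (G.ends e).1 = σ (G.ends e).2} = n ^ G.k F := by
  rw [Nat.card_congr (constEquiv G n F), Nat.card_fun, Nat.card_eq_fintype_card (α := Fin n),
    Fintype.card_fin, Multigraph.k]


lemma card_as_sum (G : Multigraph) (n : ℕ) (P : (G.V → Fin n) → Prop) :
    (Nat.card {σ // P σ} : ℂ) = ∑ σ : G.V → Fin n, if P σ then 1 else 0 := by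
  classical
  rw [Nat.card_eq_fintype_card, Fintype.card_subtype, Finset.card_filter]
  push_cast
  simp

lemma evalZ (G : Multigraph) (n : ℕ) :
    G.Z.eval (n : ℂ) = Nat.card {σ : G.V → Fin n // proper G σ} := by
  classical
  rw [Multigraph.Z, Polynomial.eval_finset_sum]
  simp only [Polynomial.eval_mul, Polynomial.eval_pow, Polynomial.eval_neg,
    Polynomial.eval_one, Polynomial.eval_X]
  have h1 : ∀ F : Finset G.E, ((n : ℂ)) ^ G.k F
      = ∑ σ : G.V → Fin n, if ∀ e ∈ F, σ (G.ends e).1 = σ (G.ends e).2 then 1 else 0 := by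
    intro F
    rw [show ((n:ℂ)) ^ G.k F = ((n ^ G.k F : ℕ) : ℂ) by push_cast; ring,
      ← card_const G n F, card_as_sum]
    refine Finset.sum_congr rfl fun σ _ => ?_
    split_ifs <;> rfl
  rw [card_as_sum]
  calc ∑ F : Finset G.E, (-1:ℂ)^F.card * (n:ℂ)^(G.k F)
      = ∑ F : Finset G.E, ∑ σ : G.V → Fin n, (-1:ℂ)^F.card *
          (if ∀ e ∈ F, σ (G.ends e).1 = σ (G.ends e).2 then 1 else 0) := by
        refine Finset.sum_congr rfl fun F _ => ?_
        rw [h1, Finset.mul_sum]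
    _ = ∑ σ : G.V → Fin n, ∑ F : Finset G.E, (-1:ℂ)^F.card *
          (if F ∈ (Finset.univ.filter (fun e => σ (G.ends e).1 = σ (G.ends e).2)).powerset
            then 1 else 0) := by
        rw [Finset.sum_comm]
        refine Finset.sum_congr rfl fun σ _ => Finset.sum_congr rfl fun F _ => ?_
        congr 1
        simp [Finset.mem_powerset, Finset.subset_iff]
    _ = ∑ σ : G.V → Fin n, if proper G σ then 1 else 0 := by
        refine Finset.sum_congr rfl fun σ _ => ?_
        simp only [mul_ite, mul_one, mul_zero]
        rw [Finset.sum_ite_mem, Finset.univ_inter]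
        have : (∑ F ∈ (Finset.univ.filter
            (fun e => σ (G.ends e).1 = σ (G.ends e).2)).powerset, (-1:ℂ)^F.card)
            = (((∑ F ∈ (Finset.univ.filter
            (fun e => σ (G.ends e).1 = σ (G.ends e).2)).powerset, (-1:ℤ)^F.card) : ℤ) : ℂ) := by
          push_cast
          rfl
        rw [this, Finset.sum_powerset_neg_one_pow_card]
        have : (Finset.univ.filter (fun e => σ (G.ends e).1 = σ (G.ends e).2)) = ∅
            ↔ proper G σ := by
          rw [Finset.filter_eq_empty_iff]
          simp [proper]
        split_ifs with h h' h' <;> simp_all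

/-- Count of proper colorings with prescribed terminal colors. -/
def cnt (G : TTGraph) (n : ℕ) (a b : Fin n) : ℕ :=
  Nat.card {σ : G.V → Fin n // proper G.toMultigraph σ ∧ σ G.s = a ∧ σ G.t = b}

lemma card_fiber {α : Type*} {β : Type*} [Finite α] [Fintype β]
    (P : α → Prop) (f : α → β) :
    Nat.card {a // P a} = ∑ b : β, Nat.card {a // P a ∧ f a = b} := by
  classical
  haveI : Fintype α := Fintype.ofFinite α
  rw [← Nat.card_congr (Equiv.sigmaFiberEquiv (fun x : {a // P a} => f x.1))]
  rw [Nat.card_eq_fintype_card, Fintype.card_sigma]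
  refine Finset.sum_congr rfl fun b _ => ?_
  rw [Nat.card_eq_fintype_card]
  exact Fintype.card_congr (Equiv.subtypeSubtypeEquivSubtypeInter P (fun a => f a = b))

lemma cnt_perm (G : TTGraph) (n : ℕ) (π : Equiv.Perm (Fin n)) (a b : Fin n) :
    cnt G n a b = cnt G n (π a) (π b) := by
  apply Nat.card_congr
  refine ⟨fun σ => ⟨π ∘ σ.1, fun e h => σ.2.1 e (π.injective h), by simp [σ.2.2.1],
      by simp [σ.2.2.2]⟩,
    fun σ => ⟨π.symm ∘ σ.1, fun e h => σ.2.1 e (π.symm.injective h), by simp [σ.2.2.1],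
      by simp [σ.2.2.2]⟩, ?_, ?_⟩ <;>
    intro σ <;> apply Subtype.ext <;> funext v <;> simp

lemma exists_perm {n : ℕ} {a b a' b' : Fin n} (hab : a = b ↔ a' = b') :
    ∃ π : Equiv.Perm (Fin n), π a = a' ∧ π b = b' := by
  by_cases h : a = b
  · subst h
    obtain rfl : a' = b' := hab.mp rfl
    exact ⟨Equiv.swap a a', Equiv.swap_apply_left a a', Equiv.swap_apply_left a a'⟩
  · have h' : a' ≠ b' := fun he => h (hab.mpr he)
    refine ⟨(Equiv.swap a a').trans (Equiv.swap ((Equiv.swap a a') b) b'), ?_, ?_⟩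
    · simp only [Equiv.trans_apply, Equiv.swap_apply_left]
      apply Equiv.swap_apply_of_ne_of_ne _ h'
      intro hc
      apply h
      have := congrArg (Equiv.swap a a') hc
      rwa [Equiv.swap_apply_right, Equiv.swap_apply_self] at this
    · simp only [Equiv.trans_apply]
      exact Equiv.swap_apply_left _ _

lemma cnt_pattern (G : TTGraph) {n : ℕ} {a b a' b' : Fin n} (h : (a = b) ↔ (a' = b')) :
    cnt G n a b = cnt G n a' b' := by
  obtain ⟨π, h1, h2⟩ := exists_perm h
  rw [cnt_perm G n π a b, h1, h2]

lemma sum_ite_one {n : ℕ} (a : Fin n) (f : Fin n → ℂ) (S D : ℂ)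
    (hf : ∀ c, f c = if c = a then S else D) :
    ∑ c : Fin n, f c = S + ((n : ℂ) - 1) * D := by
  classical
  have : ∀ c : Fin n, f c = D + (if c = a then S - D else 0) := by
    intro c
    rw [hf]
    split_ifs <;> ring
  rw [Finset.sum_congr rfl fun c _ => this c, Finset.sum_add_distrib,
    Finset.sum_const, Finset.sum_ite_eq' Finset.univ a fun _ => S - D]
  simp
  ring

lemma sum_ite_two {n : ℕ} (a b : Fin n) (hab : a ≠ b) (f : Fin n → ℂ) (A B D : ℂ)
    (hf : ∀ c, f c = if c = a then A else if c = b then B else D) :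
    ∑ c : Fin n, f c = A + B + ((n : ℂ) - 2) * D := by
  classical
  have : ∀ c : Fin n, f c = D + ((if c = a then A - D else 0) + (if c = b then B - D else 0)) := by
    intro c
    rw [hf]
    split_ifs with h1 h2 <;> first
      | (exfalso; exact hab (h1 ▸ h2 ▸ rfl))
      | ring
  rw [Finset.sum_congr rfl fun c _ => this c, Finset.sum_add_distrib, Finset.sum_add_distrib,
    Finset.sum_const, Finset.sum_ite_eq' Finset.univ a fun _ => A - D,
    Finset.sum_ite_eq' Finset.univ b fun _ => B - D]
  simp
  ring

lemma cnt_fiber_card (G : TTGraph) {n : ℕ} (P : (G.V → Fin n) → Prop)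
    (hP : ∀ σ, P σ ↔ proper G.toMultigraph σ ∧ True) (p : Fin n × Fin n) :
    Nat.card {σ : G.V → Fin n // P σ ∧ (σ G.s, σ G.t) = p} = cnt G n p.1 p.2 := by
  apply Nat.card_congr
  apply Equiv.subtypeEquivRight
  intro σ
  rw [hP, Prod.ext_iff]
  tauto

lemma evalZ_decomp (G : TTGraph) {n : ℕ} {a b : Fin n} (hab : a ≠ b) :
    G.Z.eval (n : ℂ) = (n : ℂ) * cnt G n a a + (n : ℂ) * ((n : ℂ) - 1) * cnt G n a b := by
  rw [TTGraph.Z, evalZ,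
    card_fiber (β := Fin n × Fin n) (proper G.toMultigraph) (fun σ => (σ G.s, σ G.t))]
  push_cast
  have key : ∀ p : Fin n × Fin n,
      (Nat.card {σ : G.V → Fin n // proper G.toMultigraph σ ∧ (σ G.s, σ G.t) = p} : ℂ)
        = if p.1 = p.2 then (cnt G n a a : ℂ) else (cnt G n a b : ℂ) := by
    intro p
    rw [cnt_fiber_card G _ (fun σ => (and_iff_left trivial).symm) p]
    split_ifs with h
    · exact_mod_cast cnt_pattern G (iff_of_true h rfl)
    · exact_mod_cast cnt_pattern G (iff_of_false h hab)
  rw [Finset.sum_congr rfl fun p _ => key p, Fintype.sum_prod_type]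
  have inner : ∀ a' : Fin n, (∑ b' : Fin n,
      if a' = b' then (cnt G n a a : ℂ) else (cnt G n a b : ℂ))
      = (cnt G n a a : ℂ) + ((n:ℂ) - 1) * (cnt G n a b : ℂ) := by
    intro a'
    exact sum_ite_one a' _ _ _ (fun c => by simp [eq_comm])
  rw [Finset.sum_congr rfl fun a' _ => inner a', Finset.sum_const]
  simp
  ring

lemma k2_empty (y : {y : Bool // y ≠ TTGraph.K2.s ∧ y ≠ TTGraph.K2.t}) : False := by
  obtain ⟨y, h1, h2⟩ := y
  cases y
  · exact h1 rfl
  · exact h2 rfl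

lemma card_Zdif (G : TTGraph) (n : ℕ) :
    G.Zdif.eval (n : ℂ)
      = Nat.card {σ : G.V → Fin n // proper G.toMultigraph σ ∧ σ G.s ≠ σ G.t} := by
  rw [TTGraph.Zdif, TTGraph.Z, evalZ]
  congr 1
  apply Nat.card_congr
  have pm_s : TTGraph.parMap G TTGraph.K2 false = Sum.inl G.s := by
    simp [TTGraph.parMap, TTGraph.K2]
  have pm_t : TTGraph.parMap G TTGraph.K2 true = Sum.inl G.t := by
    simp [TTGraph.parMap, TTGraph.K2]
  have h0 : ∀ u : Unit, ((G.par TTGraph.K2).ends (Sum.inr u)) = (Sum.inl G.s, Sum.inl G.t) := by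
    intro u
    show (TTGraph.parMap G TTGraph.K2 false, TTGraph.parMap G TTGraph.K2 true) = _
    rw [pm_s, pm_t]
  refine ⟨fun σ => ⟨fun v => σ.1 (Sum.inl v), ?_, ?_⟩,
    fun σ => ⟨Sum.elim σ.1 (fun y => (k2_empty y).elim), ?_⟩, ?_, ?_⟩
  · intro e
    exact σ.2 (Sum.inl e)
  · have := σ.2 (Sum.inr ())
    rw [h0] at this
    exact this
  · intro e
    cases e with
    | inl e => exact σ.2.1 e
    | inr u =>
      show ¬ Sum.elim _ _ (((G.par TTGraph.K2).ends (Sum.inr u)).1) =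
        Sum.elim _ _ (((G.par TTGraph.K2).ends (Sum.inr u)).2)
      intro hc
      apply σ.2.2
      have h1 := congrArg (fun p => Sum.elim σ.1 (fun y => (k2_empty y).elim) p.1) (h0 u)
      have h2 := congrArg (fun p => Sum.elim σ.1 (fun y => (k2_empty y).elim) p.2) (h0 u)
      exact h1.symm.trans (hc.trans h2)
  · intro σ
    apply Subtype.ext
    funext v
    cases v with
    | inl v => rfl
    | inr y => exact (k2_empty y).elim
  · intro σ
    apply Subtype.ext
    rfl

lemma evalZdif_decomp (G : TTGraph) {n : ℕ} {a b : Fin n} (hab : a ≠ b) :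
    G.Zdif.eval (n : ℂ) = (n : ℂ) * ((n : ℂ) - 1) * cnt G n a b := by
  rw [card_Zdif,
    card_fiber (β := Fin n × Fin n) (fun σ => proper G.toMultigraph σ ∧ σ G.s ≠ σ G.t)
      (fun σ => (σ G.s, σ G.t))]
  push_cast
  have key : ∀ p : Fin n × Fin n,
      (Nat.card {σ : G.V → Fin n //
          (proper G.toMultigraph σ ∧ σ G.s ≠ σ G.t) ∧ (σ G.s, σ G.t) = p} : ℂ)
        = if p.1 = p.2 then 0 else (cnt G n a b : ℂ) := by
    intro p
    split_ifs with h
    · have : IsEmpty {σ : G.V → Fin n //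
          (proper G.toMultigraph σ ∧ σ G.s ≠ σ G.t) ∧ (σ G.s, σ G.t) = p} := by
        constructor
        rintro ⟨σ, ⟨hp, hne⟩, hst⟩
        rw [Prod.ext_iff] at hst
        exact hne (hst.1.trans (h.trans hst.2.symm))
      simp [Nat.card_of_isEmpty]
    · have e1 : Nat.card {σ : G.V → Fin n //
          (proper G.toMultigraph σ ∧ σ G.s ≠ σ G.t) ∧ (σ G.s, σ G.t) = p}
          = cnt G n p.1 p.2 := by
        apply Nat.card_congr
        apply Equiv.subtypeEquivRight
        intro σ
        rw [Prod.ext_iff]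
        constructor
        · rintro ⟨⟨h1, h2⟩, h3, h4⟩
          exact ⟨h1, h3, h4⟩
        · rintro ⟨h1, h3, h4⟩
          exact ⟨⟨h1, by rw [h3, h4]; exact h⟩, h3, h4⟩
      rw [e1]
      exact_mod_cast cnt_pattern G (iff_of_false h hab)
  rw [Finset.sum_congr rfl fun p _ => key p, Fintype.sum_prod_type]
  have inner : ∀ a' : Fin n, (∑ b' : Fin n,
      if a' = b' then (0:ℂ) else (cnt G n a b : ℂ))
      = ((n:ℂ) - 1) * (cnt G n a b : ℂ) := by
    intro a'
    rw [sum_ite_one a' _ 0 ((cnt G n a b : ℂ)) (fun c => by simp [eq_comm])]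
    ring
  rw [Finset.sum_congr rfl fun a' _ => inner a', Finset.sum_const]
  simp
  ring

lemma evalZsame_decomp (G : TTGraph) {n : ℕ} {a b : Fin n} (hab : a ≠ b) :
    G.Zsame.eval (n : ℂ) = (n : ℂ) * cnt G n a a := by
  rw [TTGraph.Zsame, Polynomial.eval_sub, evalZ_decomp G hab, evalZdif_decomp G hab]
  ring

lemma elim_parMap (G₁ G₂ : TTGraph) {n : ℕ} (σ₁ : G₁.V → Fin n) (σ₂ : G₂.V → Fin n)
    (hs : σ₁ G₁.s = σ₂ G₂.s) (ht : σ₁ G₁.t = σ₂ G₂.t) (x : G₂.V) :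
    Sum.elim σ₁ (fun y : {y : G₂.V // y ≠ G₂.s ∧ y ≠ G₂.t} => σ₂ y.1)
      (TTGraph.parMap G₁ G₂ x) = σ₂ x := by
  simp only [TTGraph.parMap]
  split_ifs with h1 h2 <;> simp_all

lemma parMap_inr (G₁ G₂ : TTGraph) (y : G₂.V) (h1 : y ≠ G₂.s) (h2 : y ≠ G₂.t) :
    TTGraph.parMap G₁ G₂ y = Sum.inr ⟨y, h1, h2⟩ := by
  simp [TTGraph.parMap, h1, h2]

lemma cnt_par (G₁ G₂ : TTGraph) {n : ℕ} (a b : Fin n) :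
    cnt (G₁.par G₂) n a b = cnt G₁ n a b * cnt G₂ n a b := by
  have pm_s : TTGraph.parMap G₁ G₂ G₂.s = Sum.inl G₁.s := by
    simp [TTGraph.parMap]
  have pm_t : TTGraph.parMap G₁ G₂ G₂.t = Sum.inl G₁.t := by
    simp [TTGraph.parMap, G₂.hst.symm]
  rw [cnt, cnt, cnt, ← Nat.card_prod]
  apply Nat.card_congr
  refine ⟨fun σ => (⟨fun v => σ.1 (Sum.inl v), fun e => σ.2.1 (Sum.inl e), σ.2.2.1, σ.2.2.2⟩,
      ⟨fun x => σ.1 (TTGraph.parMap G₁ G₂ x), fun e => σ.2.1 (Sum.inr e), ?_, ?_⟩),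
    fun p => ⟨Sum.elim p.1.1 (fun y => p.2.1 y.1), ?_, p.1.2.2.1, p.1.2.2.2⟩, ?_, ?_⟩
  · show σ.1 (TTGraph.parMap G₁ G₂ G₂.s) = a
    rw [pm_s]
    exact σ.2.2.1
  · show σ.1 (TTGraph.parMap G₁ G₂ G₂.t) = b
    rw [pm_t]
    exact σ.2.2.2
  · have hs : p.1.1 G₁.s = p.2.1 G₂.s := by rw [p.1.2.2.1, p.2.2.2.1]
    have ht : p.1.1 G₁.t = p.2.1 G₂.t := by rw [p.1.2.2.2, p.2.2.2.2]
    intro e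
    cases e with
    | inl e => exact p.1.2.1 e
    | inr e =>
      show ¬ Sum.elim _ _ (TTGraph.parMap G₁ G₂ (G₂.ends e).1)
          = Sum.elim _ _ (TTGraph.parMap G₁ G₂ (G₂.ends e).2)
      rw [elim_parMap G₁ G₂ _ _ hs ht, elim_parMap G₁ G₂ _ _ hs ht]
      exact p.2.2.1 e
  · intro σ
    apply Subtype.ext
    funext v
    cases v with
    | inl v => rfl
    | inr y =>
      show σ.1 (TTGraph.parMap G₁ G₂ y.1) = σ.1 (Sum.inr y)
      rw [parMap_inr G₁ G₂ y.1 y.2.1 y.2.2]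
  · intro p
    ext : 1
    · apply Subtype.ext
      rfl
    · apply Subtype.ext
      funext x
      have hs : p.1.1 G₁.s = p.2.1 G₂.s := by rw [p.1.2.2.1, p.2.2.2.1]
      have ht : p.1.1 G₁.t = p.2.1 G₂.t := by rw [p.1.2.2.2, p.2.2.2.2]
      exact elim_parMap G₁ G₂ _ _ hs ht x

lemma elim_serMap (G₁ G₂ : TTGraph) {n : ℕ} (σ₁ : G₁.V → Fin n) (σ₂ : G₂.V → Fin n)
    (hs : σ₁ G₁.t = σ₂ G₂.s) (x : G₂.V) :
    Sum.elim σ₁ (fun y : {y : G₂.V // y ≠ G₂.s} => σ₂ y.1)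
      (TTGraph.serMap G₁ G₂ x) = σ₂ x := by
  simp only [TTGraph.serMap]
  split_ifs with h1 <;> simp_all

lemma serMap_inr (G₁ G₂ : TTGraph) (y : G₂.V) (h1 : y ≠ G₂.s) :
    TTGraph.serMap G₁ G₂ y = Sum.inr ⟨y, h1⟩ := by
  simp [TTGraph.serMap, h1]

lemma cnt_ser (G₁ G₂ : TTGraph) {n : ℕ} (a b : Fin n) :
    cnt (G₁.ser G₂) n a b = ∑ c : Fin n, cnt G₁ n a c * cnt G₂ n c b := by
  have sm_s : TTGraph.serMap G₁ G₂ G₂.s = Sum.inl G₁.t := by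
    simp [TTGraph.serMap]
  rw [cnt, card_fiber _ (fun σ => σ (Sum.inl G₁.t))]
  refine Finset.sum_congr rfl fun c _ => ?_
  rw [cnt, cnt, ← Nat.card_prod]
  apply Nat.card_congr
  refine ⟨fun σ => (⟨fun v => σ.1 (Sum.inl v), fun e => σ.2.1.1 (Sum.inl e), σ.2.1.2.1, σ.2.2⟩,
      ⟨fun x => σ.1 (TTGraph.serMap G₁ G₂ x), fun e => σ.2.1.1 (Sum.inr e), ?_, ?_⟩),
    fun p => ⟨Sum.elim p.1.1 (fun y => p.2.1 y.1), ⟨?_, p.1.2.2.1, p.2.2.2.2⟩, p.1.2.2.2⟩, ?_, ?_⟩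
  · show σ.1 (TTGraph.serMap G₁ G₂ G₂.s) = c
    rw [sm_s]
    exact σ.2.2
  · show σ.1 (TTGraph.serMap G₁ G₂ G₂.t) = b
    rw [serMap_inr G₁ G₂ G₂.t G₂.hst.symm]
    exact σ.2.1.2.2
  · have hs : p.1.1 G₁.t = p.2.1 G₂.s := by rw [p.1.2.2.2, p.2.2.2.1]
    intro e
    cases e with
    | inl e => exact p.1.2.1 e
    | inr e =>
      show ¬ Sum.elim _ _ (TTGraph.serMap G₁ G₂ (G₂.ends e).1)
          = Sum.elim _ _ (TTGraph.serMap G₁ G₂ (G₂.ends e).2)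
      rw [elim_serMap G₁ G₂ _ _ hs, elim_serMap G₁ G₂ _ _ hs]
      exact p.2.2.1 e
  · intro σ
    apply Subtype.ext
    funext v
    cases v with
    | inl v => rfl
    | inr y =>
      show σ.1 (TTGraph.serMap G₁ G₂ y.1) = σ.1 (Sum.inr y)
      rw [serMap_inr G₁ G₂ y.1 y.2]
  · intro p
    ext : 1
    · apply Subtype.ext
      rfl
    · apply Subtype.ext
      funext x
      have hs : p.1.1 G₁.t = p.2.1 G₂.s := by rw [p.1.2.2.2, p.2.2.2.1]
      exact elim_serMap G₁ G₂ _ _ hs x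

lemma poly_ext {p q : Polynomial ℂ}
    (h : ∀ m : ℕ, p.eval (((m + 2 : ℕ) : ℂ)) = q.eval (((m + 2 : ℕ) : ℂ))) : p = q := by
  rw [← sub_eq_zero]
  apply Polynomial.eq_zero_of_infinite_isRoot
  apply Set.infinite_of_injective_forall_mem (f := fun m : ℕ => (((m + 2 : ℕ) : ℂ)))
  · intro x y hxy
    have : ((x + 2 : ℕ) : ℂ) = ((y + 2 : ℕ) : ℂ) := hxy
    have := Nat.cast_injective (R := ℂ) this
    omega
  · intro m
    simp only [Set.mem_setOf_eq, Polynomial.IsRoot, Polynomial.eval_sub, h m, sub_self]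

lemma P1 (G₁ G₂ : TTGraph) :
    (X : Polynomial ℂ) * (G₁.par G₂).Zsame = G₁.Zsame * G₂.Zsame := by
  apply poly_ext
  intro m
  have hab : (⟨0, by omega⟩ : Fin (m+2)) ≠ ⟨1, by omega⟩ := by simp [Fin.ext_iff]
  rw [Polynomial.eval_mul, Polynomial.eval_mul, Polynomial.eval_X,
    evalZsame_decomp (G₁.par G₂) hab, evalZsame_decomp G₁ hab, evalZsame_decomp G₂ hab,
    cnt_par]
  push_cast
  ring

lemma P2 (G₁ G₂ : TTGraph) :
    (X : Polynomial ℂ) * (X - 1) * (G₁.par G₂).Zdif = G₁.Zdif * G₂.Zdif := by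
  apply poly_ext
  intro m
  have hab : (⟨0, by omega⟩ : Fin (m+2)) ≠ ⟨1, by omega⟩ := by simp [Fin.ext_iff]
  simp only [Polynomial.eval_mul, Polynomial.eval_sub, Polynomial.eval_X, Polynomial.eval_one]
  rw [evalZdif_decomp (G₁.par G₂) hab, evalZdif_decomp G₁ hab, evalZdif_decomp G₂ hab,
    cnt_par]
  push_cast
  ring

lemma P3 (G₁ G₂ : TTGraph) :
    (X : Polynomial ℂ) * (X - 1) * (G₁.ser G₂).Zsame
      = (X - 1) * (G₁.Zsame * G₂.Zsame) + G₁.Zdif * G₂.Zdif := by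
  apply poly_ext
  intro m
  set n := m + 2 with hn
  set a : Fin n := ⟨0, by omega⟩ with ha
  set b : Fin n := ⟨1, by omega⟩ with hb
  have hab : a ≠ b := by simp [ha, hb, Fin.ext_iff]
  have hsum : ((cnt (G₁.ser G₂) n a a : ℂ))
      = (cnt G₁ n a a : ℂ) * (cnt G₂ n a a)
        + ((n:ℂ) - 1) * ((cnt G₁ n a b : ℂ) * (cnt G₂ n a b)) := by
    have hf : ∀ c : Fin n, ((cnt G₁ n a c * cnt G₂ n c a : ℕ) : ℂ)
        = if c = a then (cnt G₁ n a a : ℂ) * (cnt G₂ n a a)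
          else (cnt G₁ n a b : ℂ) * (cnt G₂ n a b) := by
      intro c
      by_cases hc : c = a
      · subst hc
        rw [if_pos rfl]
        push_cast
        ring
      · rw [if_neg hc,
          show cnt G₁ n a c = cnt G₁ n a b from
            cnt_pattern G₁ (iff_of_false (fun h => hc h.symm) hab),
          show cnt G₂ n c a = cnt G₂ n a b from cnt_pattern G₂ (iff_of_false hc hab)]
        push_cast
        ring
    rw [cnt_ser, Nat.cast_sum, sum_ite_one a _ _ _ hf]
  simp only [Polynomial.eval_mul, Polynomial.eval_add, Polynomial.eval_sub, Polynomial.eval_X,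
    Polynomial.eval_one]
  rw [evalZsame_decomp (G₁.ser G₂) hab, evalZsame_decomp G₁ hab, evalZsame_decomp G₂ hab,
    evalZdif_decomp G₁ hab, evalZdif_decomp G₂ hab, hsum]
  ring

lemma P4 (G₁ G₂ : TTGraph) :
    (X : Polynomial ℂ) * (X - 1) * (G₁.ser G₂).Zdif
      = (X - 1) * (G₁.Zsame * G₂.Zdif + G₁.Zdif * G₂.Zsame)
        + (X - 2) * (G₁.Zdif * G₂.Zdif) := by
  apply poly_ext
  intro m
  set n := m + 2 with hn
  set a : Fin n := ⟨0, by omega⟩ with ha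
  set b : Fin n := ⟨1, by omega⟩ with hb
  have hab : a ≠ b := by simp [ha, hb, Fin.ext_iff]
  have hsum : ((cnt (G₁.ser G₂) n a b : ℂ))
      = (cnt G₁ n a a : ℂ) * (cnt G₂ n a b)
        + (cnt G₁ n a b : ℂ) * (cnt G₂ n a a)
        + ((n:ℂ) - 2) * ((cnt G₁ n a b : ℂ) * (cnt G₂ n a b)) := by
    have hf : ∀ c : Fin n, ((cnt G₁ n a c * cnt G₂ n c b : ℕ) : ℂ)
        = if c = a then (cnt G₁ n a a : ℂ) * (cnt G₂ n a b)
          else if c = b then (cnt G₁ n a b : ℂ) * (cnt G₂ n a a)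
          else (cnt G₁ n a b : ℂ) * (cnt G₂ n a b) := by
      intro c
      by_cases h1 : c = a
      · subst h1
        rw [if_pos rfl]
        push_cast
        ring
      · by_cases h2 : c = b
        · subst h2
          rw [if_neg h1, if_pos rfl,
            show cnt G₂ n b b = cnt G₂ n a a from cnt_pattern G₂ (iff_of_true rfl rfl)]
          push_cast
          ring
        · rw [if_neg h1, if_neg h2,
            show cnt G₁ n a c = cnt G₁ n a b from
              cnt_pattern G₁ (iff_of_false (fun h => h1 h.symm) hab),
            show cnt G₂ n c b = cnt G₂ n a b from cnt_pattern G₂ (iff_of_false h2 hab)]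
          push_cast
          ring
    rw [cnt_ser, Nat.cast_sum, sum_ite_two a b hab _ _ _ _ hf]
  simp only [Polynomial.eval_mul, Polynomial.eval_add, Polynomial.eval_sub, Polynomial.eval_X,
    Polynomial.eval_one, Polynomial.eval_ofNat]
  rw [evalZdif_decomp (G₁.ser G₂) hab, evalZsame_decomp G₁ hab, evalZsame_decomp G₂ hab,
    evalZdif_decomp G₁ hab, evalZdif_decomp G₂ hab, hsum]
  ring

lemma Zdif_ne_zero' (G : TTGraph) (h : G.Loopless) : G.Zdif ≠ 0 := by
  intro h0
  set n := Nat.card G.V + 2 with hn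
  have hcard := card_Zdif G n
  rw [h0, Polynomial.eval_zero] at hcard
  haveI : Fintype G.V := Fintype.ofFinite _
  have hle : Fintype.card G.V ≤ Fintype.card (Fin n) := by
    rw [Fintype.card_fin, ← Nat.card_eq_fintype_card]
    omega
  obtain ⟨f⟩ := Function.Embedding.nonempty_of_card_le hle
  haveI : Nonempty {σ : G.V → Fin n // proper G.toMultigraph σ ∧ σ G.s ≠ σ G.t} :=
    ⟨⟨f, fun e he => h e (f.injective he), fun hc => G.hst (f.injective hc)⟩⟩
  have hpos := Nat.card_pos (α := {σ : G.V → Fin n // proper G.toMultigraph σ ∧ σ G.s ≠ σ G.t})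
  rw [show Nat.card {σ : G.V → Fin n // proper G.toMultigraph σ ∧ σ G.s ≠ σ G.t} = 0 by
    exact_mod_cast hcard.symm] at hpos
  exact Nat.lt_irrefl 0 hpos

lemma ser_loopless (G₁ G₂ : TTGraph) (h₁ : G₁.Loopless) (h₂ : G₂.Loopless) :
    (G₁.ser G₂).Loopless := by
  have hinj : Function.Injective (TTGraph.serMap G₁ G₂) := by
    intro x y hxy
    by_cases hx : x = G₂.s <;> by_cases hy : y = G₂.s <;>
      simp only [TTGraph.serMap, dif_pos, dif_neg, hx, hy] at hxy ⊢ <;>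
      first
        | (subst hx; subst hy; rfl)
        | simp_all [TTGraph.serMap]
  intro e
  cases e with
  | inl e => exact fun hc => h₁ e (Sum.inl.inj hc)
  | inr e => exact fun hc => h₂ e (hinj hc)

theorem effective_interaction_composition' (G₁ G₂ : TTGraph)
    (h₁ : G₁.Loopless) (h₂ : G₂.Loopless)
    (hd₁ : G₁.Zdif ≠ 0) (hd₂ : G₂.Zdif ≠ 0) :
    (G₁.par G₂).y = G₁.y * G₂.y ∧
    (G₁.ser G₂).y * (G₁.y + G₂.y + RatFunc.X - 2) = G₁.y * G₂.y + RatFunc.X - 1 := by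
  have hdser0 : (G₁.ser G₂).Zdif ≠ 0 := Zdif_ne_zero' _ (ser_loopless G₁ G₂ h₁ h₂)
  have hdpar0 : (G₁.par G₂).Zdif ≠ 0 := by
    intro hc
    have hP := P2 G₁ G₂
    rw [hc, mul_zero] at hP
    exact (mul_ne_zero hd₁ hd₂) hP.symm
  have e1 := congrArg (algebraMap (Polynomial ℂ) (RatFunc ℂ)) (P1 G₁ G₂)
  have e2 := congrArg (algebraMap (Polynomial ℂ) (RatFunc ℂ)) (P2 G₁ G₂)
  have e3 := congrArg (algebraMap (Polynomial ℂ) (RatFunc ℂ)) (P3 G₁ G₂)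
  have e4 := congrArg (algebraMap (Polynomial ℂ) (RatFunc ℂ)) (P4 G₁ G₂)
  simp only [map_mul, map_add, map_sub, map_one, map_ofNat, RatFunc.algebraMap_X]
    at e1 e2 e3 e4
  have hD1 := RatFunc.algebraMap_ne_zero hd₁
  have hD2 := RatFunc.algebraMap_ne_zero hd₂
  have hDp := RatFunc.algebraMap_ne_zero hdpar0
  have hDs := RatFunc.algebraMap_ne_zero hdser0
  constructor
  · rw [TTGraph.y, TTGraph.y, TTGraph.y]
    field_simp
    linear_combination (-((RatFunc.X - 1) *
        algebraMap (Polynomial ℂ) (RatFunc ℂ) (G₁.par G₂).Zsame)) * e2 +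
      ((RatFunc.X - 1)^2 * algebraMap (Polynomial ℂ) (RatFunc ℂ) (G₁.par G₂).Zdif) * e1
  · rw [TTGraph.y, TTGraph.y, TTGraph.y]
    set u : RatFunc ℂ := RatFunc.X with hu
    set Ss := algebraMap (Polynomial ℂ) (RatFunc ℂ) (G₁.ser G₂).Zsame with hSs
    set Ds := algebraMap (Polynomial ℂ) (RatFunc ℂ) (G₁.ser G₂).Zdif with hDsdef
    set S1 := algebraMap (Polynomial ℂ) (RatFunc ℂ) G₁.Zsame with hS1
    set D1 := algebraMap (Polynomial ℂ) (RatFunc ℂ) G₁.Zdif with hD1def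
    set S2 := algebraMap (Polynomial ℂ) (RatFunc ℂ) G₂.Zsame with hS2
    set D2 := algebraMap (Polynomial ℂ) (RatFunc ℂ) G₂.Zdif with hD2def
    have hys : (u - 1) * Ss / Ds * Ds = (u - 1) * Ss := div_mul_cancel₀ _ hDs
    have hy1 : (u - 1) * S1 / D1 * D1 = (u - 1) * S1 := div_mul_cancel₀ _ hD1
    have hy2 : (u - 1) * S2 / D2 * D2 = (u - 1) * S2 := div_mul_cancel₀ _ hD2
    apply mul_left_cancel₀ (mul_ne_zero hDs (mul_ne_zero hD1 hD2))
    calc Ds * (D1 * D2) * ((u - 1) * Ss / Ds * ((u - 1) * S1 / D1 + (u - 1) * S2 / D2 + u - 2))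
        = ((u - 1) * Ss / Ds * Ds) * (((u - 1) * S1 / D1 * D1) * D2
            + ((u - 1) * S2 / D2 * D2) * D1 + (u - 2) * (D1 * D2)) := by ring
      _ = ((u - 1) * Ss) * ((u - 1) * S1 * D2 + (u - 1) * S2 * D1 + (u - 2) * (D1 * D2)) := by
          rw [hys, hy1, hy2]
      _ = Ds * (((u - 1) * S1) * ((u - 1) * S2) + (u - 1) * (D1 * D2)) := by
          linear_combination ((u - 1) * Ds) * e3 - ((u - 1) * Ss) * e4
      _ = Ds * (((u - 1) * S1 / D1 * D1) * ((u - 1) * S2 / D2 * D2) + (u - 1) * (D1 * D2)) := by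
          rw [hy1, hy2]
      _ = Ds * (D1 * D2) * ((u - 1) * S1 / D1 * ((u - 1) * S2 / D2) + u - 1) := by ring

end Aux

/-- **Theorem.** For two-terminal graphs with `Z^dif` not identically zero, the
effective edge interactions satisfy `y_{G₁∥G₂} = y_{G₁}·y_{G₂}` and
`y_{G₁⋈G₂}·(y_{G₁} + y_{G₂} + q - 2) = y_{G₁}·y_{G₂} + q - 1` in `ℂ(q)`. -/
theorem effective_interaction_composition (G₁ G₂ : TTGraph)
    (h₁ : G₁.Loopless) (h₂ : G₂.Loopless)
    (hd₁ : G₁.Zdif ≠ 0) (hd₂ : G₂.Zdif ≠ 0) :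
    (G₁.par G₂).y = G₁.y * G₂.y ∧
    (G₁.ser G₂).y * (G₁.y + G₂.y + RatFunc.X - 2) = G₁.y * G₂.y + RatFunc.X - 1 :=
  Aux.effective_interaction_composition' G₁ G₂ h₁ h₂ hd₁ hd₂

end
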